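/- Let H be an isolated subgroup of Γ, let f ∈ H, and let t ∈ T. If f(t) ≠ 0 then H_t ⊆ H. -/

import Mathlib

/-- The carrier of Γ: functions `T → G` with well-ordered support. -/
def Gamma (T G : Type*) [LinearOrder T] [Zero G] [LT G] : Set (T → G) :=
  {f | (Function.support f).IsWF}

/-- The (left-to-right lexicographic) order on functions `T → G`:
`f ≤ g` iff `f = g` or `f` and `g` agree before some point `t` at which `f t < g t`. -/
def lexLE {T G : Type*} [LinearOrder T] [LT G] (f g : T → G) : Prop :=
  f = g ∨ ∃ t, (∀ s, s < t → f s = g s) ∧ f t < g t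

/-- `H` is an isolated subgroup of Γ: a subgroup of Γ that is convex for the
lexicographic order. -/
def IsIsolated (T G : Type*) [LinearOrder T] [AddCommGroup G] [LinearOrder G] [IsOrderedAddMonoid G]
    (H : Set (T → G)) : Prop :=
  H ⊆ Gamma T G ∧ (0 : T → G) ∈ H ∧ (∀ f ∈ H, ∀ g ∈ H, f + g ∈ H) ∧
  (∀ f ∈ H, -f ∈ H) ∧
  ∀ h ∈ H, ∀ g ∈ Gamma T G, lexLE 0 g → lexLE g h → g ∈ H

/-- The T-isolated subgroup `H_t`: elements of Γ vanishing strictly before `t`. -/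
def Ht (T G : Type*) [LinearOrder T] [Zero G] [LT G] (t : T) : Set (T → G) :=
  {f ∈ Gamma T G | ∀ s, s < t → f s = 0}

/-- The dual T-isolated subgroup `dH_t`: elements of Γ vanishing at and before `t`. -/
def dHt (T G : Type*) [LinearOrder T] [Zero G] [LT G] (t : T) : Set (T → G) :=
  {f ∈ Gamma T G | ∀ s, s ≤ t → f s = 0}

theorem stmt9 {T G : Type*} [LinearOrder T] [Nonempty T]
    [AddCommGroup G] [LinearOrder G] [IsOrderedAddMonoid G] [Archimedean G] [Nontrivial G]
    (H : Set (T → G)) (hH : IsIsolated T G H)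
    {f : T → G} (hf : f ∈ H) {t : T} (hft : f t ≠ 0) :
    Ht T G t ⊆ H := by
  obtain ⟨hHΓ, hH0, hHadd, hHneg, hHconv⟩ := hH
  have hsmul : ∀ (h : T → G), h ∈ H → ∀ n : ℕ, n • h ∈ H := by
    intro h hh n
    induction n with
    | zero => simpa using hH0
    | succ n ih => rw [succ_nsmul]; exact hHadd _ ih _ hh
  -- f ∈ Γ
  have hfΓ : (Function.support f).IsWF := hHΓ hf
  have hfne : (Function.support f).Nonempty := ⟨t, hft⟩
  -- F : the positive one among f, -f
  set s₀ : T := hfΓ.min hfne with hs₀def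
  have hs₀mem : s₀ ∈ Function.support f := hfΓ.min_mem hfne
  have hs₀min : ∀ s, s < s₀ → f s = 0 := by
    intro s hs
    by_contra h
    exact hfΓ.not_lt_min hfne h hs
  have hs₀t : s₀ ≤ t := by
    by_contra h
    push_neg at h
    exact hfΓ.not_lt_min hfne hft h
  have key : ∃ F ∈ H, (∀ s, s < s₀ → F s = 0) ∧ 0 < F s₀ := by
    rcases lt_or_gt_of_ne (show f s₀ ≠ 0 from hs₀mem) with h | h
    · exact ⟨-f, hHneg f hf, fun s hs => by simp [hs₀min s hs], by simpa using h⟩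
    · exact ⟨f, hf, hs₀min, h⟩
  obtain ⟨F, hFH, hFbelow, hFpos⟩ := key
  -- main claim: nonnegative elements of Ht are in H
  have claim : ∀ g ∈ Ht T G t, lexLE 0 g → g ∈ H := by
    intro g hg hg0
    obtain ⟨hgΓ, hgt⟩ := hg
    rcases hg0 with h0 | ⟨u, hub, hupos⟩
    · exact h0 ▸ hH0
    simp only [Pi.zero_apply] at hub hupos
    -- g s = 0 for s < u
    have hgub : ∀ s, s < u → g s = 0 := fun s hs => (hub s hs).symm
    have htu : t ≤ u := by
      by_contra h
      push_neg at h
      exact absurd (hgt u h) (ne_of_gt hupos)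
    have hs₀u : s₀ ≤ t := hs₀t
    rcases lt_or_eq_of_le (hs₀u.trans htu) with hlt | heq
    · -- s₀ < u : g < F
      refine hHconv F hFH g hgΓ (Or.inr ⟨u, hub, by simpa using hupos⟩) (Or.inr ⟨s₀, ?_, ?_⟩)
      · intro s hs
        rw [hgub s (hs.trans hlt), hFbelow s hs]
      · rw [hgub s₀ hlt]; exact hFpos
    · -- s₀ = u
      obtain ⟨n, hn⟩ := Archimedean.arch (g u) hFpos
      refine hHconv ((n+1) • F) (hsmul F hFH (n+1)) g hgΓ
        (Or.inr ⟨u, hub, by simpa using hupos⟩) (Or.inr ⟨u, ?_, ?_⟩)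
      · intro s hs
        rw [hgub s hs]
        rw [← heq] at hs
        simp [hFbelow s hs]
      · have : g u < (n+1) • F s₀ := by
          calc g u ≤ n • F s₀ := hn
          _ < (n+1) • F s₀ := by
              rw [succ_nsmul]; exact lt_add_of_pos_right _ hFpos
        simpa [Pi.smul_apply, heq] using this
  -- now general g
  intro g hg
  obtain ⟨hgΓ, hgt⟩ := hg
  by_cases hgz : g = 0
  · exact hgz ▸ hH0
  · have hgne : (Function.support g).Nonempty := Function.support_nonempty_iff.mpr hgz
    set u : T := hgΓ.min hgne with hudef
    have humem : u ∈ Function.support g := hgΓ.min_mem hgne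
    have humin : ∀ s, s < u → g s = 0 := by
      intro s hs
      by_contra h
      exact hgΓ.not_lt_min hgne h hs
    rcases lt_or_gt_of_ne (show g u ≠ 0 from humem) with h | h
    · -- g negative; use -g
      have hnegmem : -g ∈ Ht T G t := by
        refine ⟨by simpa [Gamma, Function.support_neg] using hgΓ, fun s hs => by simp [hgt s hs]⟩
      have : -g ∈ H := by
        refine claim (-g) hnegmem (Or.inr ⟨u, fun s hs => by simp [humin s hs], by simpa using h⟩)
      simpa using hHneg _ this
    · exact claim g ⟨hgΓ, hgt⟩ (Or.inr ⟨u, fun s hs => by simp [humin s hs], by simpa using h⟩)
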